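/- Let x(·) and δx(·) satisfy δ̇x(t) = J(t) δx(t) with J continuous, and suppose J(t) + J(t)^T ≤ M I_n on a union D1 of intervals whose total lengths are each at most L, and J(t) + J(t)^T ≤ -2c I_n on the complementary intervals each of length at least k, where the intervals alternate, and c k > M L + α(k + L)/1 for some α > 0. Then |δx(t)| ≤ K e^{-λ(t - t0)} |δx(t0)| for some K, λ > 0 independent of the solution. -/

import Mathlib

open Matrix

lemma decay_lemma {n : ℕ} (J : ℝ → Matrix (Fin n) (Fin n) ℝ)
    (δ : ℝ → Fin n → ℝ) (hδ : ∀ t, HasDerivAt δ ((J t).mulVec (δ t)) t)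
    (m p q : ℝ) (hb : ∀ t ∈ Set.Icc p q, ∀ v : Fin n → ℝ,
      v ⬝ᵥ (J t + (J t)ᵀ).mulVec v ≤ m * (v ⬝ᵥ v))
    (s t : ℝ) (hps : p ≤ s) (hst : s ≤ t) (htq : t ≤ q) :
    (∑ i, (δ t i)^2) ≤ Real.exp (m * (t - s)) * ∑ i, (δ s i)^2 := by
  have hVd : ∀ u : ℝ, HasDerivAt (fun w => ∑ i, (δ w i)^2)
      (δ u ⬝ᵥ ((J u + (J u)ᵀ).mulVec (δ u))) u := by
    intro u
    have h1 : ∀ i : Fin n, HasDerivAt (fun w => δ w i) ((J u).mulVec (δ u) i) u :=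
      hasDerivAt_pi.mp (hδ u)
    have h2 : HasDerivAt (fun w => ∑ i, (δ w i)^2)
        (∑ i, 2 * δ u i * (J u).mulVec (δ u) i) u := by
      apply HasDerivAt.fun_sum
      intro i _
      have := ((h1 i).fun_pow 2)
      simpa [mul_comm, mul_assoc, mul_left_comm] using this
    convert h2 using 1
    have hsym : δ u ⬝ᵥ ((J u)ᵀ.mulVec (δ u)) = δ u ⬝ᵥ ((J u).mulVec (δ u)) := by
      rw [Matrix.mulVec_transpose, Matrix.dotProduct_mulVec, dotProduct_comm]
    rw [Matrix.add_mulVec, dotProduct_add, hsym]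
    simp only [dotProduct, Finset.mul_sum]
    rw [← Finset.sum_add_distrib]
    congr 1; ext i; ring
  set g : ℝ → ℝ := fun u => (∑ i, (δ u i)^2) * Real.exp (-(m * u)) with hg
  have hgd : ∀ u : ℝ, HasDerivAt g
      ((δ u ⬝ᵥ ((J u + (J u)ᵀ).mulVec (δ u))) * Real.exp (-(m*u))
        + (∑ i, (δ u i)^2) * (Real.exp (-(m*u)) * (-m))) u := by
    intro u
    have he : HasDerivAt (fun w : ℝ => Real.exp (-(m*w))) (Real.exp (-(m*u)) * (-m)) u := by
      have hi : HasDerivAt (fun w : ℝ => -(m*w)) (-m) u := by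
        simpa using ((hasDerivAt_id u).const_mul m).fun_neg
      exact (Real.hasDerivAt_exp _).comp u hi
    exact (hVd u).mul he
  have hanti : AntitoneOn g (Set.Icc s t) := by
    apply antitoneOn_of_deriv_nonpos (convex_Icc s t)
    · exact fun u _ => ((hgd u).continuousAt).continuousWithinAt
    · exact fun u _ => ((hgd u).differentiableAt).differentiableWithinAt
    · intro u hu
      rw [interior_Icc] at hu
      rw [(hgd u).deriv]
      have hmem : u ∈ Set.Icc p q := ⟨hps.trans hu.1.le, hu.2.le.trans htq⟩
      have hbd := hb u hmem (δ u)
      have hdp : δ u ⬝ᵥ δ u = ∑ i, (δ u i)^2 := by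
        simp [dotProduct, sq]
      rw [hdp] at hbd
      have hexp : (0:ℝ) < Real.exp (-(m*u)) := Real.exp_pos _
      nlinarith [hexp, hbd]
  have := hanti (Set.left_mem_Icc.mpr hst) (Set.right_mem_Icc.mpr hst) hst
  simp only [hg] at this
  have hexp : (0:ℝ) < Real.exp (-(m * t)) := Real.exp_pos _
  rw [show m * (t - s) = -(m*s) - -(m*t) by ring, Real.exp_sub]
  rw [div_mul_eq_mul_div, le_div_iff₀ hexp]
  calc (∑ i, (δ t i)^2) * Real.exp (-(m*t)) ≤ (∑ i, (δ s i)^2) * Real.exp (-(m*s)) := this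
    _ = Real.exp (-(m*s)) * (∑ i, (δ s i)^2) := by ring


/-- alternating good/bad intervals for a linear time-varying system.
On the "good" intervals `[a_{2i}, a_{2i+1}]` (length ≥ k) the symmetric part of `J`
is `≤ -2c Iₙ`, on the "bad" intervals `[a_{2i+1}, a_{2i+2}]` (length ≤ L) it is
`≤ M Iₙ`; if `c k > M L + α (k + L)` then every solution of `δ̇x = J(t) δx` decays
as `|δx(t)| ≤ K e^{-λ(t - t0)} |δx(t0)|` with `K, λ > 0` independent of the solution. -/
theorem stmt_16 (n : ℕ) (J : ℝ → Matrix (Fin n) (Fin n) ℝ) (hJ : Continuous J)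
    (M L c k α : ℝ) (hM : 0 < M) (hL : 0 < L) (hc : 0 < c) (hk : 0 < k) (hα : 0 < α)
    (a : ℤ → ℝ) (hmono : StrictMono a)
    (htop : Filter.Tendsto a Filter.atTop Filter.atTop)
    (hbot : Filter.Tendsto a Filter.atBot Filter.atBot)
    (hgood_len : ∀ i : ℤ, k ≤ a (2 * i + 1) - a (2 * i))
    (hbad_len : ∀ i : ℤ, a (2 * i + 2) - a (2 * i + 1) ≤ L)
    (hgood : ∀ i : ℤ, ∀ t ∈ Set.Icc (a (2 * i)) (a (2 * i + 1)), ∀ v : Fin n → ℝ,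
      v ⬝ᵥ (J t + (J t)ᵀ).mulVec v ≤ -2 * c * (v ⬝ᵥ v))
    (hbad : ∀ i : ℤ, ∀ t ∈ Set.Icc (a (2 * i + 1)) (a (2 * i + 2)), ∀ v : Fin n → ℝ,
      v ⬝ᵥ (J t + (J t)ᵀ).mulVec v ≤ M * (v ⬝ᵥ v))
    (hrate : M * L + α * (k + L) < c * k) :
    ∃ K lam : ℝ, 0 < K ∧ 0 < lam ∧
      ∀ δ : ℝ → Fin n → ℝ, (∀ t, HasDerivAt δ ((J t).mulVec (δ t)) t) →
        ∀ t0 t : ℝ, t0 ≤ t →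
          Real.sqrt (∑ i, (δ t i) ^ 2) ≤
            K * Real.exp (-lam * (t - t0)) * Real.sqrt (∑ i, (δ t0 i) ^ 2) := by
  classical
  set C : ℝ := Real.exp ((M + 2*α) * L) with hCdef
  have hCpos : 0 < C := Real.exp_pos _
  have hC1 : 1 ≤ C := Real.one_le_exp (by positivity)
  have hcα : α < c := by nlinarith
  have hidx : ∀ p q : ℤ, p = q → a p = a q := fun p q h => by rw [h]
  refine ⟨C, α, hCpos, hα, ?_⟩
  intro δ hδ t0 t ht0t
  set V : ℝ → ℝ := fun u => ∑ i, (δ u i)^2 with hVdef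
  have hVnonneg : ∀ u, 0 ≤ V u := fun u => Finset.sum_nonneg fun i _ => sq_nonneg _
  -- single-interval Gronwall bounds
  have hGood : ∀ i : ℤ, ∀ s u : ℝ, a (2*i) ≤ s → s ≤ u → u ≤ a (2*i+1) →
      V u ≤ Real.exp ((-(2*c)) * (u - s)) * V s := by
    intro i s u hs hsu hu
    refine decay_lemma J δ hδ (-(2*c)) (a (2*i)) (a (2*i+1)) ?_ s u hs hsu hu
    intro w hw v
    have := hgood i w hw v
    linarith
  have hBad : ∀ i : ℤ, ∀ s u : ℝ, a (2*i+1) ≤ s → s ≤ u → u ≤ a (2*i+2) →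
      V u ≤ Real.exp (M * (u - s)) * V s := by
    intro i s u hs hsu hu
    exact decay_lemma J δ hδ M (a (2*i+1)) (a (2*i+2)) (hbad i) s u hs hsu hu
  -- same-pair bound
  have hP : ∀ i : ℤ, ∀ s u : ℝ, a (2*i) ≤ s → s ≤ u → u ≤ a (2*i+2) →
      V u ≤ C * Real.exp ((-(2*α)) * (u - s)) * V s := by
    intro i s u hs hsu hu
    have hmid1 : a (2*i) ≤ a (2*i+1) := (hmono (by omega)).le
    have hmid2 : a (2*i+1) ≤ a (2*i+2) := (hmono (by omega)).le
    have hblen := hbad_len i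
    rcases le_or_gt u (a (2*i+1)) with hcase | hcase
    · have h1 := hGood i s u hs hsu hcase
      have h2 : Real.exp ((-(2*c)) * (u - s)) ≤ C * Real.exp ((-(2*α)) * (u - s)) := by
        rw [hCdef, ← Real.exp_add]
        apply Real.exp_le_exp.mpr
        nlinarith
      calc V u ≤ Real.exp ((-(2*c)) * (u - s)) * V s := h1
        _ ≤ C * Real.exp ((-(2*α)) * (u - s)) * V s :=
            mul_le_mul_of_nonneg_right h2 (hVnonneg s)
    rcases le_or_gt (a (2*i+1)) s with hcase2 | hcase2
    · have h1 := hBad i s u hcase2 hsu hu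
      have h2 : Real.exp (M * (u - s)) ≤ C * Real.exp ((-(2*α)) * (u - s)) := by
        rw [hCdef, ← Real.exp_add]
        apply Real.exp_le_exp.mpr
        nlinarith
      calc V u ≤ Real.exp (M * (u - s)) * V s := h1
        _ ≤ C * Real.exp ((-(2*α)) * (u - s)) * V s :=
            mul_le_mul_of_nonneg_right h2 (hVnonneg s)
    · have h1 := hBad i (a (2*i+1)) u le_rfl hcase.le hu
      have h2 := hGood i s (a (2*i+1)) hs hcase2.le le_rfl
      have h3 : Real.exp (M * (u - a (2*i+1))) * Real.exp ((-(2*c)) * (a (2*i+1) - s))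
          ≤ C * Real.exp ((-(2*α)) * (u - s)) := by
        rw [hCdef, ← Real.exp_add, ← Real.exp_add]
        apply Real.exp_le_exp.mpr
        nlinarith
      calc V u ≤ Real.exp (M * (u - a (2*i+1))) * V (a (2*i+1)) := h1
        _ ≤ Real.exp (M * (u - a (2*i+1))) *
            (Real.exp ((-(2*c)) * (a (2*i+1) - s)) * V s) :=
            mul_le_mul_of_nonneg_left h2 (Real.exp_pos _).le
        _ = (Real.exp (M * (u - a (2*i+1))) * Real.exp ((-(2*c)) * (a (2*i+1) - s))) * V s := by
            ring
        _ ≤ C * Real.exp ((-(2*α)) * (u - s)) * V s :=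
            mul_le_mul_of_nonneg_right h3 (hVnonneg s)
  -- full pair decay
  have hPair : ∀ i : ℤ, V (a (2*i+2)) ≤
      Real.exp ((-(2*α)) * (a (2*i+2) - a (2*i))) * V (a (2*i)) := by
    intro i
    have hmid1 : a (2*i) ≤ a (2*i+1) := (hmono (by omega)).le
    have hmid2 : a (2*i+1) ≤ a (2*i+2) := (hmono (by omega)).le
    have h1 := hBad i (a (2*i+1)) (a (2*i+2)) le_rfl hmid2 le_rfl
    have h2 := hGood i (a (2*i)) (a (2*i+1)) le_rfl hmid1 le_rfl
    have hglen := hgood_len i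
    have hblen := hbad_len i
    have h3 : Real.exp (M * (a (2*i+2) - a (2*i+1))) *
        Real.exp ((-(2*c)) * (a (2*i+1) - a (2*i)))
        ≤ Real.exp ((-(2*α)) * (a (2*i+2) - a (2*i))) := by
      rw [← Real.exp_add]
      apply Real.exp_le_exp.mpr
      nlinarith [mul_nonneg (sub_nonneg.mpr hcα.le) (sub_nonneg.mpr hglen),
        mul_nonneg (by nlinarith : (0:ℝ) ≤ M + 2*α)
          (sub_nonneg.mpr hblen)]
    calc V (a (2*i+2)) ≤ Real.exp (M * (a (2*i+2) - a (2*i+1))) * V (a (2*i+1)) := h1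
      _ ≤ Real.exp (M * (a (2*i+2) - a (2*i+1))) *
          (Real.exp ((-(2*c)) * (a (2*i+1) - a (2*i))) * V (a (2*i))) :=
          mul_le_mul_of_nonneg_left h2 (Real.exp_pos _).le
      _ = (Real.exp (M * (a (2*i+2) - a (2*i+1))) *
          Real.exp ((-(2*c)) * (a (2*i+1) - a (2*i)))) * V (a (2*i)) := by ring
      _ ≤ Real.exp ((-(2*α)) * (a (2*i+2) - a (2*i))) * V (a (2*i)) :=
          mul_le_mul_of_nonneg_right h3 (hVnonneg _)
  -- chained decay from an even node
  have hChain : ∀ N : ℕ, ∀ i : ℤ, ∀ u : ℝ, a (2*i) ≤ u → u ≤ a (2*i + 2*(N:ℤ) + 2) →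
      V u ≤ C * Real.exp ((-(2*α)) * (u - a (2*i))) * V (a (2*i)) := by
    intro N
    induction N with
    | zero =>
      intro i u h1 h2
      exact hP i (a (2*i)) u le_rfl h1 (by simpa using h2)
    | succ N ih =>
      intro i u h1 h2
      rcases le_or_gt u (a (2*i+2)) with hcase | hcase
      · exact hP i (a (2*i)) u le_rfl h1 hcase
      · have h2' : u ≤ a (2*(i+1) + 2*(N:ℤ) + 2) := by
          refine h2.trans (le_of_eq (hidx _ _ (by push_cast; ring)))
        have hih := ih (i+1) u
          (le_of_eq_of_le (hidx (2*(i+1)) (2*i+2) (by ring)) hcase.le) h2'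
        rw [hidx (2*(i+1)) (2*i+2) (by ring)] at hih
        have hpair := hPair i
        calc V u ≤ C * Real.exp ((-(2*α)) * (u - a (2*i+2))) * V (a (2*i+2)) := hih
          _ ≤ C * Real.exp ((-(2*α)) * (u - a (2*i+2))) *
              (Real.exp ((-(2*α)) * (a (2*i+2) - a (2*i))) * V (a (2*i))) :=
              mul_le_mul_of_nonneg_left hpair (by positivity)
          _ = C * (Real.exp ((-(2*α)) * (u - a (2*i+2))) *
              Real.exp ((-(2*α)) * (a (2*i+2) - a (2*i)))) * V (a (2*i)) := by ring
          _ = C * Real.exp ((-(2*α)) * (u - a (2*i))) * V (a (2*i)) := by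
              rw [← Real.exp_add]; ring_nf
  -- locate t0
  have hbdd : ∃ b : ℤ, ∀ z : ℤ, a (2*z) ≤ t0 → z ≤ b := by
    obtain ⟨m, hm⟩ := Filter.eventually_atTop.mp (htop.eventually_gt_atTop t0)
    refine ⟨|m|, fun z hz => ?_⟩
    have h2z : 2*z < m := by
      by_contra h
      push_neg at h
      exact absurd (hm _ h) (not_lt.mpr hz)
    have := abs_nonneg m
    have := le_abs_self m
    omega
  have hinh : ∃ z : ℤ, a (2*z) ≤ t0 := by
    obtain ⟨m, hm⟩ := Filter.eventually_atBot.mp (hbot.eventually_le_atBot t0)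
    exact ⟨-(|m|+1), hm _ (by have := le_abs_self m; have := neg_abs_le m; omega)⟩
  obtain ⟨i, hi, hgr⟩ := Int.exists_greatest_of_bdd hbdd hinh
  have ht0lt : t0 < a (2*i+2) := by
    by_contra h
    push_neg at h
    have : a (2*(i+1)) ≤ t0 := le_of_eq_of_le (hidx _ _ (by ring)) h
    have := hgr _ this
    omega
  -- main V bound
  have hmain : V t ≤ (C*C) * Real.exp ((-(2*α)) * (t - t0)) * V t0 := by
    rcases le_or_gt t (a (2*i+2)) with hcase | hcase
    · have h := hP i t0 t hi ht0t hcase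
      have : C * Real.exp ((-(2*α)) * (t - t0)) * V t0
          ≤ (C*C) * Real.exp ((-(2*α)) * (t - t0)) * V t0 := by
        have h0 : 0 ≤ Real.exp ((-(2*α)) * (t - t0)) * V t0 := by positivity
        nlinarith [mul_nonneg (mul_nonneg hCpos.le (sub_nonneg.mpr hC1)) h0]
      calc V t ≤ C * Real.exp ((-(2*α)) * (t - t0)) * V t0 := h
        _ ≤ _ := this
    · obtain ⟨m2, hm2⟩ := Filter.eventually_atTop.mp (htop.eventually_ge_atTop t)
      set N : ℕ := (m2 - (2*i+4)).toNat with hN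
      have hNle : m2 ≤ 2*(i+1) + 2*(N:ℤ) + 2 := by
        have := Int.self_le_toNat (m2 - (2*i+4))
        omega
      have ht_le : t ≤ a (2*(i+1) + 2*(N:ℤ) + 2) :=
        (hm2 m2 le_rfl).trans (hmono.monotone hNle)
      have hchain := hChain N (i+1) t
        (le_of_eq_of_le (hidx _ _ (by ring)) hcase.le) ht_le
      rw [hidx (2*(i+1)) (2*i+2) (by ring)] at hchain
      have hpp := hP i t0 (a (2*i+2)) hi ht0lt.le le_rfl
      calc V t ≤ C * Real.exp ((-(2*α)) * (t - a (2*i+2))) * V (a (2*i+2)) := hchain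
        _ ≤ C * Real.exp ((-(2*α)) * (t - a (2*i+2))) *
            (C * Real.exp ((-(2*α)) * (a (2*i+2) - t0)) * V t0) :=
            mul_le_mul_of_nonneg_left hpp (by positivity)
        _ = (C*C) * (Real.exp ((-(2*α)) * (t - a (2*i+2))) *
            Real.exp ((-(2*α)) * (a (2*i+2) - t0))) * V t0 := by ring
        _ = (C*C) * Real.exp ((-(2*α)) * (t - t0)) * V t0 := by
            rw [← Real.exp_add, ← Real.exp_add, show ((-(2*α)) * (t - a (2*i+2)) +
              (-(2*α)) * (a (2*i+2) - t0)) = (-(2*α)) * (t - t0) by ring]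
  -- take square roots
  have hrw : (C*C) * Real.exp ((-(2*α)) * (t - t0)) * V t0
      = (C * Real.exp (-α * (t - t0)))^2 * V t0 := by
    rw [show (-(2*α)) * (t - t0) = (-α * (t-t0)) + (-α * (t-t0)) by ring, Real.exp_add]
    ring
  have hs := Real.sqrt_le_sqrt (hrw ▸ hmain)
  rw [Real.sqrt_mul (sq_nonneg _), Real.sqrt_sq (by positivity)] at hs
  exact hs
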